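/- Let d_n → ∞ be a sequence in (0,∞), and for each n and each x ∈ K let a_n(x) ∈ S^{m−1} be any minimizer of a ↦ Φ_{d_n}(x,a) over the unit sphere S^{m−1}. Then sup over x ∈ K of |a_n(x) − p̄(x)| → 0 as n → ∞; i.e., the minimizers converge to p̄ uniformly on K. -/

import Mathlib

open scoped RealInnerProductSpace

noncomputable section

/-- The matrix `S` applied to a vector of Euclidean space. -/
def mv {m : ℕ} (S : Matrix (Fin m) (Fin m) ℝ) (v : EuclideanSpace ℝ (Fin m)) :
    EuclideanSpace ℝ (Fin m) := Matrix.toEuclideanLin S v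

/-- φ(a,b,c,d;p,S) = −(1/2)(a−b)ᵀS(a−b) − (c+d)((a+b)·p). -/
def phi {m : ℕ} (a b : EuclideanSpace ℝ (Fin m)) (c d : ℝ)
    (p : EuclideanSpace ℝ (Fin m)) (S : Matrix (Fin m) (Fin m) ℝ) : ℝ :=
  -(1 / 2) * ⟪a - b, mv S (a - b)⟫ - (c + d) * ⟪a + b, p⟫


/-- `Φ_d(x,a) = −(1/2)(a+p̄(x))ᵀS(x)(a+p̄(x)) + d(1 − a·p̄(x))|p(x)|`, written here with
the data `p = p(x)`, `S = S(x)` as arguments. -/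
def PhiFn {m : ℕ} (p : EuclideanSpace ℝ (Fin m)) (S : Matrix (Fin m) (Fin m) ℝ)
    (d : ℝ) (a : EuclideanSpace ℝ (Fin m)) : ℝ :=
  -(1 / 2) * ⟪a + ‖p‖⁻¹ • p, mv S (a + ‖p‖⁻¹ • p)⟫ + d * (1 - ⟪a, ‖p‖⁻¹ • p⟫) * ‖p‖

lemma mv_apply {m : ℕ} (S : Matrix (Fin m) (Fin m) ℝ) (v : EuclideanSpace ℝ (Fin m)) (i : Fin m) :
    mv S v i = ∑ j, S i j * v j := by
  rw [mv, Matrix.toEuclideanLin_apply]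
  rfl

lemma coord_le {m : ℕ} (v : EuclideanSpace ℝ (Fin m)) (i : Fin m) : |v i| ≤ ‖v‖ := by
  have : v i = ⟪EuclideanSpace.single i (1:ℝ), v⟫ := by
    simp [EuclideanSpace.inner_single_left]
  rw [this]
  calc |⟪EuclideanSpace.single i (1:ℝ), v⟫| ≤ ‖EuclideanSpace.single i (1:ℝ)‖ * ‖v‖ :=
        abs_real_inner_le_norm _ _
    _ = ‖v‖ := by simp [EuclideanSpace.norm_single]

lemma quad_abs_le {m : ℕ} (S : Matrix (Fin m) (Fin m) ℝ) {M : ℝ} (hM0 : 0 ≤ M)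
    (hSb : ∀ i j, |S i j| ≤ M) (v : EuclideanSpace ℝ (Fin m)) :
    |⟪v, mv S v⟫| ≤ (m:ℝ)^2 * M * ‖v‖^2 := by
  have h : ⟪v, mv S v⟫ = ∑ i, ∑ j, v i * (S i j * v j) := by
    simp [PiLp.inner_apply, mv_apply, Finset.mul_sum]
    refine Finset.sum_congr rfl fun i _ => ?_
    rw [Finset.sum_mul]
    exact Finset.sum_congr rfl fun j _ => by ring
  rw [h]
  calc |∑ i, ∑ j, v i * (S i j * v j)| ≤ ∑ i, |∑ j, v i * (S i j * v j)| :=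
        Finset.abs_sum_le_sum_abs _ _
    _ ≤ ∑ i : Fin m, ∑ j : Fin m, |v i * (S i j * v j)| := by
        refine Finset.sum_le_sum fun i _ => Finset.abs_sum_le_sum_abs _ _
    _ ≤ ∑ i : Fin m, ∑ j : Fin m, ‖v‖ * (M * ‖v‖) := by
        refine Finset.sum_le_sum fun i _ => Finset.sum_le_sum fun j _ => ?_
        rw [abs_mul, abs_mul]
        have h1 := coord_le v i
        have h2 := coord_le v j
        have h3 : |S i j| ≤ M := hSb i j
        have hn : (0:ℝ) ≤ ‖v‖ := norm_nonneg _
        have hS : (0:ℝ) ≤ M := hM0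
        exact mul_le_mul h1 (mul_le_mul h3 h2 (abs_nonneg _) hS)
          (mul_nonneg (abs_nonneg _) (abs_nonneg _)) hn
    _ = (m:ℝ)^2 * M * ‖v‖^2 := by
        simp [Finset.sum_const]
        ring


set_option maxHeartbeats 1000000 in
/-- Minimizers of `Φ_{d_n}(x,·)` over the unit sphere converge to `p̄` uniformly on `K`
as `d_n → ∞`. -/
theorem stmt9 {m : ℕ} (hm : 2 ≤ m)
    (K : Set (EuclideanSpace ℝ (Fin m))) (hK : IsCompact K) (hKne : K.Nonempty)
    (p : EuclideanSpace ℝ (Fin m) → EuclideanSpace ℝ (Fin m)) (hpc : ContinuousOn p K)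
    (hp0 : ∀ x ∈ K, p x ≠ 0)
    (S : EuclideanSpace ℝ (Fin m) → Matrix (Fin m) (Fin m) ℝ) (hSc : ContinuousOn S K)
    (hSsymm : ∀ x ∈ K, (S x).IsSymm)
    (dseq : ℕ → ℝ) (hdpos : ∀ n, 0 < dseq n)
    (hdtop : Filter.Tendsto dseq Filter.atTop Filter.atTop)
    (aseq : ℕ → EuclideanSpace ℝ (Fin m) → EuclideanSpace ℝ (Fin m))
    (haunit : ∀ n, ∀ x ∈ K, ‖aseq n x‖ = 1)
    (hamin : ∀ n, ∀ x ∈ K, ∀ a : EuclideanSpace ℝ (Fin m), ‖a‖ = 1 →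
      PhiFn (p x) (S x) (dseq n) (aseq n x) ≤ PhiFn (p x) (S x) (dseq n) a)
    :
    TendstoUniformlyOn (fun (n : ℕ) (x : EuclideanSpace ℝ (Fin m)) => aseq n x)
      (fun x => ‖p x‖⁻¹ • p x) Filter.atTop K := by
  -- lower bound on ‖p x‖
  obtain ⟨x₀, hx₀, hmin⟩ := hK.exists_isMinOn hKne (hpc.norm)
  set c : ℝ := ‖p x₀‖ with hc
  have hcpos : 0 < c := norm_pos_iff.mpr (hp0 x₀ hx₀)
  have hclb : ∀ x ∈ K, c ≤ ‖p x‖ := fun x hx => isMinOn_iff.mp hmin x hx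
  -- upper bound on ‖S x‖
  have hScomp : ∀ i j : Fin m, ContinuousOn (fun x => S x i j) K := by
    intro i j
    exact ((continuous_apply j).comp (continuous_apply i)).comp_continuousOn hSc
  have hfc : ContinuousOn (fun x => ∑ i : Fin m, ∑ j : Fin m, |S x i j|) K := by
    refine continuousOn_finset_sum _ fun i _ => continuousOn_finset_sum _ fun j _ => ?_
    exact (hScomp i j).abs
  obtain ⟨M, hM⟩ := hK.exists_bound_of_continuousOn hfc
  have hMent : ∀ x ∈ K, ∀ i j, |S x i j| ≤ M := by
    intro x hx i j
    have h2 : ∑ j : Fin m, |S x i j| ≤ ∑ i : Fin m, ∑ j : Fin m, |S x i j| :=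
      Finset.single_le_sum (f := fun i => ∑ j : Fin m, |S x i j|)
        (fun i _ => Finset.sum_nonneg fun j _ => abs_nonneg _) (Finset.mem_univ i)
    have h3 : |S x i j| ≤ ∑ j : Fin m, |S x i j| :=
      Finset.single_le_sum (f := fun j => |S x i j|) (fun j _ => abs_nonneg _) (Finset.mem_univ j)
    have h1 : |S x i j| ≤ ∑ i : Fin m, ∑ j : Fin m, |S x i j| := h3.trans h2
    calc |S x i j| ≤ ∑ i : Fin m, ∑ j : Fin m, |S x i j| := h1
      _ ≤ ‖∑ i : Fin m, ∑ j : Fin m, |S x i j|‖ := Real.le_norm_self _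
      _ ≤ M := hM x hx
  have hM0 : 0 ≤ M := by
    obtain ⟨x, hx⟩ := hKne
    rcases Nat.eq_zero_or_pos m with hm0 | hm0
    · omega
    · exact le_trans (abs_nonneg _) (hMent x hx ⟨0, hm0⟩ ⟨0, hm0⟩)
  set Q : ℝ := (m:ℝ)^2 * M with hQ
  have hQ0 : 0 ≤ Q := by positivity
  -- key estimate
  have key : ∀ n, ∀ x ∈ K,
      ‖aseq n x - ‖p x‖⁻¹ • p x‖^2 ≤ 8 * Q / (dseq n * c) := by
    intro n x hx
    set b : EuclideanSpace ℝ (Fin m) := ‖p x‖⁻¹ • p x with hb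
    have hpx : p x ≠ 0 := hp0 x hx
    have hbn : ‖b‖ = 1 := by
      rw [hb, norm_smul, norm_inv, norm_norm, inv_mul_cancel₀ (norm_ne_zero_iff.mpr hpx)]
    set a : EuclideanSpace ℝ (Fin m) := aseq n x with ha
    have han : ‖a‖ = 1 := haunit n x hx
    have hmin2 := hamin n x hx b hbn
    have hbb : ⟪b, b⟫ = 1 := by
      rw [real_inner_self_eq_norm_sq, hbn]; norm_num
    have hqb : ∀ v : EuclideanSpace ℝ (Fin m), ‖v‖ ≤ 2 → |⟪v, mv (S x) v⟫| ≤ 4 * Q := by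
      intro v hv
      calc |⟪v, mv (S x) v⟫| ≤ (m:ℝ)^2 * M * ‖v‖^2 := quad_abs_le _ hM0 (hMent x hx) _
        _ ≤ (m:ℝ)^2 * M * 2^2 := by
            have h2 : ‖v‖^2 ≤ 2^2 := by nlinarith [norm_nonneg v]
            have hm2 : (0:ℝ) ≤ (m:ℝ)^2 * M := by positivity
            nlinarith
        _ = 4 * Q := by rw [hQ]; ring
    have hab : ‖a + b‖ ≤ 2 := by
      calc ‖a + b‖ ≤ ‖a‖ + ‖b‖ := norm_add_le _ _
        _ = 2 := by rw [han, hbn]; norm_num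
    have hbb2 : ‖b + b‖ ≤ 2 := by
      calc ‖b + b‖ ≤ ‖b‖ + ‖b‖ := norm_add_le _ _
        _ = 2 := by rw [hbn]; norm_num
    unfold PhiFn at hmin2
    rw [← hb, ← ha, hbb] at hmin2
    have e1 := hqb _ hab
    have e2 := hqb _ hbb2
    have hdn := hdpos n
    have hstep : dseq n * (1 - ⟪a, b⟫) * ‖p x‖ ≤ 4 * Q := by
      have := abs_le.mp e1
      have := abs_le.mp e2
      nlinarith [abs_le.mp e1, abs_le.mp e2]
    have hpc2 : c ≤ ‖p x‖ := hclb x hx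
    have hnorm2 : ‖a - b‖^2 = 2 * (1 - ⟪a, b⟫) := by
      rw [norm_sub_sq_real, han, hbn]; ring
    have h1ab : 0 ≤ 1 - ⟪a, b⟫ := by nlinarith [hnorm2, sq_nonneg ‖a - b‖]
    have hstep2 : dseq n * (1 - ⟪a, b⟫) * c ≤ 4 * Q := by
      nlinarith
    have hdcpos : 0 < dseq n * c := mul_pos hdn hcpos
    rw [hnorm2, le_div_iff₀ hdcpos]
    nlinarith [hstep2]
  -- conclude uniform convergence
  rw [Metric.tendstoUniformlyOn_iff]
  intro eps heps
  have hT : ∀ᶠ n in Filter.atTop, 8 * Q / (c * eps ^ 2) + 1 ≤ dseq n :=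
    hdtop.eventually (Filter.eventually_ge_atTop _)
  filter_upwards [hT] with n hn x hx
  have hdn := hdpos n
  have hk := key n x hx
  have hlt : 8 * Q / (dseq n * c) < eps ^ 2 := by
    rw [div_lt_iff₀ (mul_pos hdn hcpos)]
    have h1 : 8 * Q / (c * eps ^ 2) + 1 ≤ dseq n := hn
    have h2 : 8 * Q / (c * eps ^ 2) * (c * eps ^ 2) = 8 * Q := by
      field_simp
    nlinarith [mul_pos hcpos (pow_pos heps 2)]
  have hfin : ‖aseq n x - ‖p x‖⁻¹ • p x‖ ^ 2 < eps ^ 2 := lt_of_le_of_lt hk hlt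
  have := lt_of_pow_lt_pow_left₀ 2 (le_of_lt heps) hfin
  rw [dist_eq_norm, norm_sub_rev]
  exact this

end
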